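/- arXiv:0809.3921 — 2 statements merged into one kernel-verified Lean document; each statement's English description precedes it below -/
import Mathlib

section
/- For every X̂ ∈ ℝ^{2×2} and every X′ ∈ ℝ, the supremum over all ξ ∈ ℝ^{2×2} of ([X̂]·[ξ] + (X′ − y)(det ξ − y))/W(ξ) equals √(‖[X̂]‖² + (X′ − y)²). -/
open Matrix Filter Topology

attribute [local instance] Matrix.frobeniusSeminormedAddCommGroup
  Matrix.frobeniusNormedAddCommGroup Matrix.frobeniusNormedSpace

abbrev M2 := Matrix (Fin 2) (Fin 2) ℝ

noncomputable section

def E11 : M2 := Matrix.single 0 0 1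

def E22 : M2 := Matrix.single 1 1 1

/-- `[ξ]`: the matrix `ξ` with its `(1,1)` entry replaced by `0`. -/
def br (ξ : M2) : M2 := ξ - ξ 0 0 • E11

/-- `W(ξ) = √(‖[ξ]‖² + (det ξ − y)²)` with the Frobenius norm. -/
def Wf (y : ℝ) (ξ : M2) : ℝ := Real.sqrt (‖br ξ‖ ^ 2 + (ξ.det - y) ^ 2)

end
lemma norm_sq_eq (A : M2) : ‖A‖ ^ 2 = ∑ i, ∑ j, (A i j) ^ 2 := by
  rw [Matrix.frobenius_norm_def]
  rw [← Real.rpow_natCast ((∑ i, ∑ j, ‖A i j‖ ^ (2:ℝ)) ^ (1 / 2 : ℝ)) 2,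
    ← Real.rpow_mul (by positivity)]
  norm_num

lemma norm_br_sq (ξ : M2) : ‖br ξ‖ ^ 2 = (ξ 0 1)^2 + (ξ 1 0)^2 + (ξ 1 1)^2 := by
  rw [norm_sq_eq]
  simp [Fin.sum_univ_two, br, E11, Matrix.single]
  ring

lemma trace_eq (A ξ : M2) : ((br A)ᵀ * br ξ).trace
    = (A 0 1) * (ξ 0 1) + (A 1 0) * (ξ 1 0) + (A 1 1) * (ξ 1 1) := by
  simp [Matrix.trace_fin_two, Matrix.mul_apply, Fin.sum_univ_two, br, E11,
    Matrix.single]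
  ring

lemma key_pos (y : ℝ) (hy : 0 < y) (ξ : M2) : 0 < ‖br ξ‖^2 + (ξ.det - y)^2 := by
  rw [norm_br_sq, Matrix.det_fin_two]
  rcases eq_or_ne (ξ 1 1) 0 with h11 | h11
  · rcases eq_or_ne (ξ 0 1) 0 with h01 | h01
    · rcases eq_or_ne (ξ 1 0) 0 with h10 | h10
      · rw [h11, h01, h10]; nlinarith
      · positivity
    · positivity
  · positivity

set_option maxHeartbeats 1600000 in
/-- ⨆_{ξ} ([X̂]·[ξ] + (X′ − y)(det ξ − y))/W(ξ) = √(‖[X̂]‖² + (X′ − y)²). -/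
theorem stmt_10 (y : ℝ) (hy : 0 < y) (Xh : M2) (X' : ℝ) :
    (⨆ ξ : M2, (((br Xh)ᵀ * br ξ).trace + (X' - y) * (ξ.det - y)) / Wf y ξ) =
      Real.sqrt (‖br Xh‖ ^ 2 + (X' - y) ^ 2) := by
  set p := Xh 0 1 with hp
  set q := Xh 1 0 with hq
  set r := Xh 1 1 with hr
  set c := X' - y with hc
  have hT : ‖br Xh‖ ^ 2 + (X' - y) ^ 2 = p^2 + q^2 + r^2 + c^2 := by
    rw [norm_br_sq]
  rw [hT]
  set T := p^2 + q^2 + r^2 + c^2 with hTdef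
  have hT0 : 0 ≤ T := by positivity
  set S := Real.sqrt T with hS
  clear_value p q r c T S
  have hWpos : ∀ ξ : M2, 0 < Wf y ξ := fun ξ => Real.sqrt_pos.mpr (key_pos y hy ξ)
  -- upper bound
  have hub : ∀ ξ : M2, (((br Xh)ᵀ * br ξ).trace + c * (ξ.det - y)) / Wf y ξ ≤ S := by
    intro ξ
    rw [div_le_iff₀ (hWpos ξ)]
    have hSW : S * Wf y ξ = Real.sqrt (T * (‖br ξ‖^2 + (ξ.det - y)^2)) := by
      rw [hS, Wf, Real.sqrt_mul hT0]
    rw [hSW, trace_eq, ← hp, ← hq, ← hr]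
    set N := p * ξ 0 1 + q * ξ 1 0 + r * ξ 1 1 + c * (ξ.det - y) with hN
    rcases le_or_gt N 0 with hN0 | hN0
    · exact hN0.trans (Real.sqrt_nonneg _)
    · rw [Real.le_sqrt hN0.le]
      rw [norm_br_sq]
      set u := ξ 0 1; set v := ξ 1 0; set w := ξ 1 1; set d := ξ.det - y
      rw [hN, hTdef]
      · nlinarith [sq_nonneg (p*v - q*u), sq_nonneg (p*w - r*u), sq_nonneg (p*d - c*u),
          sq_nonneg (q*w - r*v), sq_nonneg (q*d - c*v), sq_nonneg (r*d - c*w)]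
      · exact mul_nonneg hT0 (by positivity)
  have hbdd : BddAbove (Set.range fun ξ : M2 =>
      (((br Xh)ᵀ * br ξ).trace + c * (ξ.det - y)) / Wf y ξ) := by
    refine ⟨S, ?_⟩
    rintro _ ⟨ξ, rfl⟩
    exact hub ξ
  rcases eq_or_lt_of_le hT0 with hT0' | hT0'
  · -- degenerate: T = 0
    clear hub hbdd hWpos hT
    have h4 : p^2 + q^2 + r^2 + c^2 = 0 := by rw [← hTdef, ← hT0']
    have hp0 : p = 0 := by nlinarith [h4, sq_nonneg p, sq_nonneg q, sq_nonneg r, sq_nonneg c]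
    have hq0 : q = 0 := by nlinarith [h4, sq_nonneg p, sq_nonneg q, sq_nonneg r, sq_nonneg c]
    have hr0 : r = 0 := by nlinarith [h4, sq_nonneg p, sq_nonneg q, sq_nonneg r, sq_nonneg c]
    have hc0 : c = 0 := by nlinarith [h4, sq_nonneg p, sq_nonneg q, sq_nonneg r, sq_nonneg c]
    have : ∀ ξ : M2, (((br Xh)ᵀ * br ξ).trace + c * (ξ.det - y)) / Wf y ξ = 0 := by
      intro ξ
      rw [trace_eq, ← hp, ← hq, ← hr, hp0, hq0, hr0, hc0]
      simp
    simp only [this, ciSup_const]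
    rw [hS, ← hT0', Real.sqrt_zero]
  · -- nondegenerate: 0 < T
    have hSpos : 0 < S := by rw [hS]; exact Real.sqrt_pos.mpr hT0'
    refine le_antisymm (ciSup_le hub) ?_
    rw [← sSup_range, le_csSup_iff hbdd (Set.range_nonempty _)]
    intro b hb
    -- sequence construction
    set e : ℝ := if 0 ≤ r then 1 else -1 with he
    set u : ℕ → ℝ := fun n => r + e / (n + 1) with hu
    have hun : ∀ n : ℕ, u n ≠ 0 := by
      intro n
      have hn : (0:ℝ) < 1 / (n + 1) := by positivity
      rw [hu]
      rcases le_or_gt 0 r with h | h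
      · simp only [he, if_pos h]
        positivity
      · simp only [he, if_neg (not_le.mpr h)]
        have : r + -1 / (n + 1) < 0 := by
          have : -1 / ((n:ℝ) + 1) < 0 := by
            rw [div_neg_iff]; right; constructor <;> [norm_num; positivity]
          linarith
        exact this.ne
    have hulim : Tendsto u atTop (𝓝 r) := by
      have h1 : Tendsto (fun n : ℕ => e / (n + 1)) atTop (𝓝 0) := by
        have := tendsto_one_div_add_atTop_nhds_zero_nat.const_mul e
        simpa [div_eq_mul_inv, mul_comm] using this
      have := tendsto_const_nhds.add h1 (f := fun _ : ℕ => r) (x := atTop)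
      simpa using this
    set ξs : ℕ → M2 := fun n => !![(X' + p * q) / u n, p; q, u n] with hξs
    have hfval : ∀ n : ℕ, (((br Xh)ᵀ * br (ξs n)).trace + c * ((ξs n).det - y)) / Wf y (ξs n)
        = (p*p + q*q + r * u n + c*c) / Real.sqrt (p^2 + q^2 + (u n)^2 + c^2) := by
      intro n
      have hdet : (ξs n).det = X' := by
        rw [hξs]
        simp only [Matrix.det_fin_two_of]
        rw [div_mul_cancel₀ _ (hun n)]
        ring
      have h01 : (ξs n) 0 1 = p := by simp [hξs]
      have h10 : (ξs n) 1 0 = q := by simp [hξs]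
      have h11 : (ξs n) 1 1 = u n := by simp [hξs]
      rw [trace_eq, Wf, norm_br_sq, hdet, h01, h10, h11, ← hp, ← hq, ← hr, ← hc]
    have hnum : Tendsto (fun n => p*p + q*q + r * u n + c*c) atTop (𝓝 T) := by
      have h1 : Tendsto (fun n => p*p + q*q + r * u n + c*c) atTop
          (𝓝 (p*p + q*q + r * r + c*c)) :=
        ((tendsto_const_nhds.add (hulim.const_mul r)).add tendsto_const_nhds)
      have hTT : T = p*p + q*q + r*r + c*c := by rw [hTdef]; ring
      rw [hTT]; exact h1
    have hden : Tendsto (fun n => Real.sqrt (p^2 + q^2 + (u n)^2 + c^2)) atTop (𝓝 S) := by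
      have hinner : Tendsto (fun n => p^2 + q^2 + (u n)^2 + c^2) atTop (𝓝 T) := by
        have : Tendsto (fun n => p^2 + q^2 + (u n)^2 + c^2) atTop
            (𝓝 (p^2 + q^2 + r^2 + c^2)) :=
          ((tendsto_const_nhds.add (hulim.pow 2)).add tendsto_const_nhds)
        simpa [hTdef] using this
      rw [hS]; exact hinner.sqrt
    have hquot : Tendsto (fun n => (p*p + q*q + r * u n + c*c) /
        Real.sqrt (p^2 + q^2 + (u n)^2 + c^2)) atTop (𝓝 S) := by
      have := hnum.div hden hSpos.ne'
      have hTS : T / S = S := by rw [hS]; exact Real.div_sqrt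
      rwa [hTS] at this
    refine le_of_tendsto hquot (Eventually.of_forall fun n => ?_)
    rw [← hfval n]
    exact hb (Set.mem_range_self (ξs n))
end

section
/- Define f : ℝ^{2×2} → ℝ by f(ξ) := √(‖ξ‖² + (det ξ)²). Then for every ξ ≠ 0, f is Fréchet differentiable at ξ and for all η ∈ ℝ^{2×2}: f(ξ + η) − f(ξ) − f′(ξ)(η) ≥ (det ξ / f(ξ))·det η. -/
open Matrix Filter Topology

attribute [local instance] Matrix.frobeniusSeminormedAddCommGroup
  Matrix.frobeniusNormedAddCommGroup Matrix.frobeniusNormedSpace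

section Aux

lemma normsq_sum (A : M2) : ‖A‖ ^ 2 = ∑ i, ∑ j, A i j ^ 2 := by
  have h2 : ∀ x : ℝ, ‖x‖ ^ (2:ℝ) = x ^ 2 := fun x => by
    rw [Real.norm_eq_abs, show (2:ℝ) = ((2:ℕ):ℝ) by norm_num, Real.rpow_natCast, sq_abs]
  have h := Matrix.frobenius_norm_def A
  rw [h, ← Real.rpow_natCast _ 2, ← Real.rpow_mul (by positivity),
    show (1/2 : ℝ) * (2:ℕ) = 1 by norm_num, Real.rpow_one]
  simp only [h2]

lemma normsq_eq (A : M2) : ‖A‖ ^ 2 = A 0 0 ^ 2 + A 0 1 ^ 2 + A 1 0 ^ 2 + A 1 1 ^ 2 := by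
  rw [normsq_sum]
  simp [Fin.sum_univ_two]
  ring

lemma entry_bound (i j : Fin 2) (A : M2) : ‖A i j‖ ≤ ‖A‖ := by
  rw [← Real.sqrt_sq (norm_nonneg A), Real.norm_eq_abs, ← Real.sqrt_sq_eq_abs]
  apply Real.sqrt_le_sqrt
  rw [normsq_sum]
  calc A i j ^ 2 ≤ ∑ j', A i j' ^ 2 :=
        Finset.single_le_sum (f := fun j' => A i j' ^ 2) (fun _ _ => sq_nonneg _) (Finset.mem_univ j)
    _ ≤ ∑ i', ∑ j', A i' j' ^ 2 :=
        Finset.single_le_sum (f := fun i' => ∑ j', A i' j' ^ 2)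
          (fun _ _ => Finset.sum_nonneg fun _ _ => sq_nonneg _) (Finset.mem_univ i)

noncomputable def entryCLM (i j : Fin 2) : M2 →L[ℝ] ℝ :=
  LinearMap.mkContinuous
    { toFun := fun A : M2 => A i j
      map_add' := fun A B => rfl
      map_smul' := fun c A => rfl } 1
    (fun A => by rw [one_mul]; exact entry_bound i j A)

@[simp] lemma entryCLM_apply (i j : Fin 2) (A : M2) : entryCLM i j A = A i j := rfl

lemma cs5 (x1 x2 x3 x4 x5 y1 y2 y3 y4 y5 : ℝ) :
    x1*y1 + x2*y2 + x3*y3 + x4*y4 + x5*y5 ≤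
      Real.sqrt (x1^2 + x2^2 + x3^2 + x4^2 + x5^2) *
        Real.sqrt (y1^2 + y2^2 + y3^2 + y4^2 + y5^2) := by
  set d := x1*y1 + x2*y2 + x3*y3 + x4*y4 + x5*y5 with hd
  rcases le_or_gt d 0 with h | h
  · exact h.trans (by positivity)
  · have h2 : d ^ 2 ≤ (x1^2 + x2^2 + x3^2 + x4^2 + x5^2) * (y1^2 + y2^2 + y3^2 + y4^2 + y5^2) := by
      nlinarith [sq_nonneg (x1*y2 - x2*y1), sq_nonneg (x1*y3 - x3*y1), sq_nonneg (x1*y4 - x4*y1),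
        sq_nonneg (x1*y5 - x5*y1), sq_nonneg (x2*y3 - x3*y2), sq_nonneg (x2*y4 - x4*y2),
        sq_nonneg (x2*y5 - x5*y2), sq_nonneg (x3*y4 - x4*y3), sq_nonneg (x3*y5 - x5*y3),
        sq_nonneg (x4*y5 - x5*y4)]
    calc d = Real.sqrt (d ^ 2) := (Real.sqrt_sq h.le).symm
      _ ≤ Real.sqrt _ := Real.sqrt_le_sqrt h2
      _ = _ := Real.sqrt_mul (by positivity) _

end Aux

/-- For f(ξ) := √(‖ξ‖² + (det ξ)²) and ξ ≠ 0: f is differentiable at ξ and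
f(ξ + η) − f(ξ) − f′(ξ)(η) ≥ (det ξ / f(ξ)) · det η for all η. -/
theorem stmt_16 (f : M2 → ℝ) (hf : ∀ ξ : M2, f ξ = Real.sqrt (‖ξ‖ ^ 2 + ξ.det ^ 2))
    (ξ : M2) (hξ : ξ ≠ 0) :
    DifferentiableAt ℝ f ξ ∧
    ∀ η : M2, f (ξ + η) - f ξ - fderiv ℝ f ξ η ≥ (ξ.det / f ξ) * η.det := by
  have hfun : f = fun A : M2 => Real.sqrt
      (A 0 0 * A 0 0 + A 0 1 * A 0 1 + A 1 0 * A 1 0 + A 1 1 * A 1 1 +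
        (A 0 0 * A 1 1 - A 0 1 * A 1 0) * (A 0 0 * A 1 1 - A 0 1 * A 1 0)) := by
    funext A
    rw [hf, normsq_eq, Matrix.det_fin_two]
    congr 1
    ring
  subst hfun
  set a := ξ 0 0 with ha
  set b := ξ 0 1 with hb
  set c := ξ 1 0 with hc
  set d := ξ 1 1 with hdd
  have hSpos : (0:ℝ) < a * a + b * b + c * c + d * d + (a * d - b * c) * (a * d - b * c) := by
    have h1 : ‖ξ‖ > 0 := norm_pos_iff.2 hξ
    have h2 := normsq_eq ξ
    nlinarith [sq_nonneg (a * d - b * c)]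
  have h00 := (entryCLM 0 0).hasFDerivAt (x := ξ)
  have h01 := (entryCLM 0 1).hasFDerivAt (x := ξ)
  have h10 := (entryCLM 1 0).hasFDerivAt (x := ξ)
  have h11 := (entryCLM 1 1).hasFDerivAt (x := ξ)
  have hg := ((((h00.mul h00).add (h01.mul h01)).add (h10.mul h10)).add (h11.mul h11)).add
    (((h00.mul h11).sub (h01.mul h10)).mul ((h00.mul h11).sub (h01.mul h10)))
  have hsd : HasDerivAt Real.sqrt
      (1 / (2 * Real.sqrt (a * a + b * b + c * c + d * d + (a * d - b * c) * (a * d - b * c))))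
      (a * a + b * b + c * c + d * d + (a * d - b * c) * (a * d - b * c)) :=
    Real.hasDerivAt_sqrt (ne_of_gt hSpos)
  have hF := hsd.comp_hasFDerivAt ξ hg
  constructor
  · exact hF.differentiableAt
  · intro η
    have hη : fderiv ℝ (fun A : M2 => Real.sqrt
        (A 0 0 * A 0 0 + A 0 1 * A 0 1 + A 1 0 * A 1 0 + A 1 1 * A 1 1 +
          (A 0 0 * A 1 1 - A 0 1 * A 1 0) * (A 0 0 * A 1 1 - A 0 1 * A 1 0))) ξ η
        = 1 / (2 * Real.sqrt (a * a + b * b + c * c + d * d + (a * d - b * c) * (a * d - b * c))) *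
          (a * η 0 0 + a * η 0 0 + (b * η 0 1 + b * η 0 1) + (c * η 1 0 + c * η 1 0) +
            (d * η 1 1 + d * η 1 1) +
            ((a * d - b * c) * (a * η 1 1 + d * η 0 0 - (b * η 1 0 + c * η 0 1)) +
              (a * d - b * c) * (a * η 1 1 + d * η 0 0 - (b * η 1 0 + c * η 0 1)))) := by
      rw [show fderiv ℝ (fun A : M2 => Real.sqrt
          (A 0 0 * A 0 0 + A 0 1 * A 0 1 + A 1 0 * A 1 0 + A 1 1 * A 1 1 +
            (A 0 0 * A 1 1 - A 0 1 * A 1 0) * (A 0 0 * A 1 1 - A 0 1 * A 1 0))) ξ = _ from hF.fderiv]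
      rfl
    rw [hη]
    simp only [ContinuousLinearMap.smul_apply, ContinuousLinearMap.add_apply,
      ContinuousLinearMap.coe_sub', Pi.sub_apply, ContinuousLinearMap.coe_smul',
      Pi.add_apply, Pi.smul_apply, entryCLM_apply, smul_eq_mul, Matrix.add_apply,
      Matrix.det_fin_two]
    rw [← ha, ← hb, ← hc, ← hdd]
    set p := η 0 0 with hp
    set q := η 0 1 with hq
    set r := η 1 0 with hr
    set s := η 1 1 with hs
    have hFpos : 0 < Real.sqrt (a*a + b*b + c*c + d*d + (a*d - b*c)*(a*d - b*c)) :=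
      Real.sqrt_pos.2 hSpos
    set F := Real.sqrt (a*a + b*b + c*c + d*d + (a*d - b*c)*(a*d - b*c)) with hFdef
    have hFsq : F * F = a*a + b*b + c*c + d*d + (a*d - b*c)*(a*d - b*c) :=
      Real.mul_self_sqrt hSpos.le
    have key := cs5 a b c d (a*d - b*c) (a+p) (b+q) (c+r) (d+s)
      ((a+p)*(d+s) - (b+q)*(c+r))
    rw [show a^2 + b^2 + c^2 + d^2 + (a*d - b*c)^2
        = a*a + b*b + c*c + d*d + (a*d - b*c)*(a*d - b*c) by ring,
      show (a+p)^2 + (b+q)^2 + (c+r)^2 + (d+s)^2 + ((a+p)*(d+s) - (b+q)*(c+r))^2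
        = (a+p)*(a+p) + (b+q)*(b+q) + (c+r)*(c+r) + (d+s)*(d+s) +
          ((a+p)*(d+s) - (b+q)*(c+r)) * ((a+p)*(d+s) - (b+q)*(c+r)) by ring] at key
    set G := Real.sqrt ((a+p)*(a+p) + (b+q)*(b+q) + (c+r)*(c+r) + (d+s)*(d+s) +
      ((a+p)*(d+s) - (b+q)*(c+r)) * ((a+p)*(d+s) - (b+q)*(c+r))) with hGdef
    rw [ge_iff_le, div_mul_eq_mul_div, div_le_iff₀ hFpos]
    set Z := a*p + a*p + (b*q + b*q) + (c*r + c*r) + (d*s + d*s) +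
      ((a*d - b*c) * (a*s + d*p - (b*r + c*q)) + (a*d - b*c) * (a*s + d*p - (b*r + c*q))) with hZ
    have h3 : (G - F - 1/(2*F) * Z) * F = G*F - F*F - Z/2 := by
      field_simp
    rw [h3]
    have h4 : G*F - F*F - Z/2 - (a*d - b*c)*(p*s - q*r)
        = F*G - (a*(a+p) + b*(b+q) + c*(c+r) + d*(d+s) +
          (a*d - b*c) * ((a+p)*(d+s) - (b+q)*(c+r))) := by
      rw [hZ]
      linear_combination -hFsq
    linarith [key, h4]
end
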